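/- Let N ≥ 1 be an integer, let ν : {1,…,N} → ℝ and let c₁, c₂ ≥ 0 satisfy 0 ≤ ν(n) ≤ c₁ + c₂ for all n. Set S = Σ_n ν(n), m(n) = max(ν(n) − c₂, 0), h(n) = max(ν(n) − c₁, 0), and let S₁ be a real number with Σ_n m(n) ≤ S₁ ≤ S − Σ_n h(n). Assume D := S − Σ_n m(n) − Σ_n h(n) > 0 and set γ = (S₁ − Σ_n m(n))/D, ν₁(n) = m(n) + (ν(n) − m(n) − h(n))γ and ν₂(n) = h(n) + (ν(n) − m(n) − h(n))(1 − γ). Then 0 ≤ γ ≤ 1, and for every n: ν₁(n) + ν₂(n) = ν(n), 0 ≤ ν₁(n) ≤ c₁ and 0 ≤ ν₂(n) ≤ c₂; moreover Σ_n ν₁(n) = S₁ and Σ_n ν₂(n) = S − S₁. -/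

import Mathlib

open Finset

/-- Generic storage-splitting construction used in Lemmas 1 and 2: the storage
`ν(n)` of each database is split into `ν₁(n) + ν₂(n) = ν(n)` respecting the
per-database caps `c₁, c₂` and the prescribed global totals `S₁` and `S − S₁`. -/
theorem pruw_generic_splitting
    (N : ℕ) (hN : 1 ≤ N) (ν : Fin N → ℝ) (c₁ c₂ : ℝ)
    (hc₁ : 0 ≤ c₁) (hc₂ : 0 ≤ c₂)
    (hν : ∀ n, 0 ≤ ν n ∧ ν n ≤ c₁ + c₂)
    (S : ℝ) (hS : S = ∑ n, ν n)
    (m h : Fin N → ℝ)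
    (hm : ∀ n, m n = max (ν n - c₂) 0)
    (hh : ∀ n, h n = max (ν n - c₁) 0)
    (S₁ : ℝ) (hS₁lb : (∑ n, m n) ≤ S₁) (hS₁ub : S₁ ≤ S - ∑ n, h n)
    (D : ℝ) (hD : D = S - (∑ n, m n) - (∑ n, h n)) (hDpos : 0 < D)
    (γ : ℝ) (hγ : γ = (S₁ - ∑ n, m n) / D)
    (ν₁ ν₂ : Fin N → ℝ)
    (hν₁ : ∀ n, ν₁ n = m n + (ν n - m n - h n) * γ)
    (hν₂ : ∀ n, ν₂ n = h n + (ν n - m n - h n) * (1 - γ)) :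
    0 ≤ γ ∧ γ ≤ 1 ∧
    (∀ n, ν₁ n + ν₂ n = ν n) ∧
    (∀ n, 0 ≤ ν₁ n ∧ ν₁ n ≤ c₁) ∧
    (∀ n, 0 ≤ ν₂ n ∧ ν₂ n ≤ c₂) ∧
    (∑ n, ν₁ n) = S₁ ∧ (∑ n, ν₂ n) = S - S₁ := by

  have hγ0 : 0 ≤ γ := by
    rw [hγ]; exact div_nonneg (by linarith) hDpos.le
  have hγ1 : γ ≤ 1 := by
    rw [hγ]; rw [div_le_one hDpos]; linarith
  have key : ∀ n, 0 ≤ m n ∧ 0 ≤ h n ∧ m n + h n ≤ ν n ∧ ν n - h n ≤ c₁ ∧ ν n - m n ≤ c₂ := by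
    intro n
    obtain ⟨h0, h1⟩ := hν n
    rw [hm n, hh n]
    rcases le_total (ν n - c₂) 0 with h2 | h2 <;> rcases le_total (ν n - c₁) 0 with h3 | h3 <;>
      [rw [max_eq_right h2, max_eq_right h3]; rw [max_eq_right h2, max_eq_left h3];
       rw [max_eq_left h2, max_eq_right h3]; rw [max_eq_left h2, max_eq_left h3]] <;>
      refine ⟨by linarith, by linarith, by linarith, by linarith, by linarith⟩
  have hpt : ∀ n, ν₁ n + ν₂ n = ν n := by
    intro n; rw [hν₁ n, hν₂ n]; ring
  have hsumt : ∑ n, (ν n - m n - h n) = D := by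
    rw [hD, hS]
    rw [Finset.sum_sub_distrib, Finset.sum_sub_distrib]
  have hsum1 : (∑ n, ν₁ n) = S₁ := by
    have h1 : (∑ n, ν₁ n) = (∑ n, m n) + (∑ n, (ν n - m n - h n)) * γ := by
      simp only [hν₁]
      rw [Finset.sum_add_distrib, Finset.sum_mul]
    rw [h1, hsumt, hγ]
    field_simp
    ring
  refine ⟨hγ0, hγ1, hpt, ?_, ?_, hsum1, ?_⟩
  · intro n
    obtain ⟨k1, k2, k3, k4, k5⟩ := key n
    rw [hν₁ n]
    constructor
    · nlinarith
    · nlinarith [mul_nonneg (by linarith : (0:ℝ) ≤ ν n - m n - h n) (by linarith : (0:ℝ) ≤ 1 - γ)]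
  · intro n
    obtain ⟨k1, k2, k3, k4, k5⟩ := key n
    rw [hν₂ n]
    constructor
    · nlinarith
    · nlinarith [mul_nonneg (by linarith : (0:ℝ) ≤ ν n - m n - h n) hγ0]
  · have : (∑ n, ν₂ n) = ∑ n, (ν n - ν₁ n) := by
      refine Finset.sum_congr rfl fun n _ => ?_
      have := hpt n; linarith
    rw [this, Finset.sum_sub_distrib, hsum1, ← hS]
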